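/- For every μ ∈ ℝ and every λ ≥ 0, one has max{ 1 − e^{μ − λ}, 0 } + min{ e^{μ + λ} − 1, 0 } ≤ 1 − e^{−2λ}, with equality at μ = −λ. -/
import Mathlib


/-- Worst-case bound: for all `μ` and `λ ≥ 0`,
`max{1 − e^{μ−λ}, 0} + min{e^{μ+λ} − 1, 0} ≤ 1 − e^{−2λ}`, with equality at
`μ = −λ`. -/
theorem worst_case_error_probability_bound (μ lam : ℝ) (hlam : 0 ≤ lam) :
    (max (1 - Real.exp (μ - lam)) 0 + min (Real.exp (μ + lam) - 1) 0
      ≤ 1 - Real.exp (-(2 * lam))) ∧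
    (max (1 - Real.exp (-lam - lam)) 0 + min (Real.exp (-lam + lam) - 1) 0
      = 1 - Real.exp (-(2 * lam))) := by
  have he2 : Real.exp (-(2 * lam)) ≤ 1 := Real.exp_le_one_iff.mpr (by linarith)
  constructor
  · rcases le_or_gt 0 (μ + lam) with h | h
    · have hmin : min (Real.exp (μ + lam) - 1) 0 = 0 := by
        have := Real.one_le_exp h
        simp [min_eq_right]; linarith
      rw [hmin, add_zero]
      have h1 : Real.exp (-(2 * lam)) ≤ Real.exp (μ - lam) :=
        Real.exp_le_exp.mpr (by linarith)
      exact max_le (by linarith) (by linarith)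
    · have hmax : max (1 - Real.exp (μ - lam)) 0 = 1 - Real.exp (μ - lam) := by
        have := Real.exp_lt_one_iff.mpr (show μ - lam < 0 by linarith)
        exact max_eq_left (by linarith)
      have hmin : min (Real.exp (μ + lam) - 1) 0 = Real.exp (μ + lam) - 1 := by
        have := Real.exp_lt_one_iff.mpr h
        exact min_eq_left (by linarith)
      rw [hmax, hmin]
      have key : Real.exp (μ - lam) = Real.exp (μ + lam) * Real.exp (-(2 * lam)) := by
        rw [← Real.exp_add]; ring_nf
      have ht : Real.exp (μ + lam) < 1 := Real.exp_lt_one_iff.mpr h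
      nlinarith [Real.exp_pos (μ + lam), Real.exp_pos (-(2 * lam))]
  · have h1 : -lam - lam = -(2 * lam) := by ring
    rw [h1, show -lam + lam = 0 by ring, Real.exp_zero]
    simp [max_eq_left (by linarith : (0:ℝ) ≤ 1 - Real.exp (-(2 * lam)))]
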